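/- Let p be a prime, ω ∈ ℂ a primitive p-th root of unity, and J ⊆ {0,...,p-1}. Suppose g(x) = ∑_{j∈J} a_j x^j with a_j ∈ ℤ[ω], and g vanishes at ω^i for all i in some set I ⊆ {0,...,p-1} with |I| = |J|. Then the reduction of g modulo the ideal (1-ω), viewed as a polynomial over 𝔽_p via ℤ[ω]/(1-ω) ≅ 𝔽_p, is the zero polynomial. -/
import Mathlib

/-- The subring ℤ[ω] of ℂ. -/
noncomputable def Zomega (ω : ℂ) : Subalgebra ℤ ℂ := Algebra.adjoin ℤ {ω}

/-- ω as an element of ℤ[ω]. -/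
noncomputable def omegaEl (ω : ℂ) : Zomega ω :=
  ⟨ω, Algebra.subset_adjoin (Set.mem_singleton ω)⟩

/-- The principal ideal (1 - ω) of ℤ[ω]. -/
noncomputable def oneSubOmegaIdeal (ω : ℂ) : Ideal (Zomega ω) :=
  Ideal.span {1 - omegaEl ω}

open Polynomial in
/-- Tao's lemma: a polynomial over `ZMod p` supported in degrees `< p`, with at most `k`
nonzero coefficients, divisible by `(X-1)^k`, is zero. -/
lemma tao_lemma (p : ℕ) [Fact p.Prime] :
    ∀ (k : ℕ) (f : Polynomial (ZMod p)), (∀ j ∈ f.support, j < p) → f.support.card ≤ k →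
      (X - 1 : Polynomial (ZMod p)) ^ k ∣ f → f = 0 := by
  intro k
  induction k with
  | zero =>
    intro f _ hcard _
    rw [Nat.le_zero, Finset.card_eq_zero, Polynomial.support_eq_empty] at hcard
    exact hcard
  | succ k ih =>
    intro f hlt hcard hdvd
    by_contra hf
    obtain ⟨j0, hj0⟩ := (Polynomial.support_nonempty.2 hf)
    set c : ZMod p := (j0 : ZMod p) with hc
    set g : Polynomial (ZMod p) := X * derivative f - C c * f with hgdef
    have hcoeff : ∀ j : ℕ, g.coeff j = ((j : ZMod p) - c) * f.coeff j := by
      intro j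
      cases j with
      | zero =>
        simp only [hgdef, coeff_sub, mul_coeff_zero, coeff_X_zero, zero_mul, coeff_C_mul,
          Nat.cast_zero, coeff_C]
        simp
      | succ n =>
        simp only [hgdef, coeff_sub, coeff_X_mul, coeff_derivative, coeff_C_mul]
        push_cast
        ring
    have hsub : g.support ⊆ f.support.erase j0 := by
      intro j hj
      rw [Polynomial.mem_support_iff, hcoeff] at hj
      have h1 : f.coeff j ≠ 0 := fun h => hj (by simp [h])
      have h2 : j ≠ j0 := by
        rintro rfl
        exact hj (by simp [hc])
      exact Finset.mem_erase.2 ⟨h2, Polynomial.mem_support_iff.2 h1⟩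
    have hgdvd : (X - 1 : Polynomial (ZMod p)) ^ k ∣ g := by
      obtain ⟨h, hh⟩ := hdvd
      refine ⟨X * (C ((k : ZMod p) + 1) * h + (X - 1) * derivative h) - C c * ((X - 1) * h), ?_⟩
      rw [hgdef, hh, derivative_mul, derivative_pow]
      simp only [Nat.add_sub_cancel, derivative_sub, derivative_X, derivative_one, sub_zero,
        Nat.cast_add, Nat.cast_one]
      ring
    have hg0 : g = 0 := by
      refine ih g (fun j hj => hlt j (Finset.erase_subset _ _ (hsub hj))) ?_ hgdvd
      have := Finset.card_le_card hsub
      rw [Finset.card_erase_of_mem hj0] at this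
      omega
    have hsupp : f.support ⊆ {j0} := by
      intro j hj
      rcases eq_or_ne j j0 with rfl | hne
      · exact Finset.mem_singleton_self _
      exfalso
      have h1 : g.coeff j = 0 := by rw [hg0]; simp
      rw [hcoeff] at h1
      have h2 : ((j : ZMod p) - c) ≠ 0 := by
        rw [sub_ne_zero, hc]
        intro h
        exact hne (CharP.natCast_injOn_Iio (ZMod p) p (hlt j hj) (hlt j0 hj0) h)
      exact Polynomial.mem_support_iff.1 hj (by
        rcases mul_eq_zero.1 h1 with h | h
        · exact absurd h h2
        · exact h)
    have heval : f.eval 1 = f.coeff j0 := by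
      rw [Polynomial.eval_eq_sum, Polynomial.sum_def]
      rw [Finset.sum_subset hsupp (fun x _ hx => by
        simp [Polynomial.notMem_support_iff.1 hx])]
      simp
    have hdvd1 : (X - 1 : Polynomial (ZMod p)) ∣ f :=
      dvd_trans (dvd_pow_self _ (Nat.succ_ne_zero k)) hdvd
    obtain ⟨q, hq⟩ := hdvd1
    have hz : f.eval 1 = 0 := by rw [hq]; simp
    rw [heval] at hz
    exact Polynomial.mem_support_iff.1 hj0 hz

theorem reduction_zero (p : ℕ) (hp : p.Prime) (ω : ℂ) (hω : IsPrimitiveRoot ω p)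
    (I J : Finset ℕ) (hI : I ⊆ Finset.range p) (hJ : J ⊆ Finset.range p)
    (hcard : I.card = J.card) (a : ℕ → Zomega ω)
    (g : Polynomial (Zomega ω))
    (hg : g = ∑ j ∈ J, Polynomial.C (a j) * Polynomial.X ^ j)
    (hvan : ∀ i ∈ I, ∑ j ∈ J, ((a j : ℂ) * (ω ^ i) ^ j) = 0)
    (e : ((Zomega ω) ⧸ oneSubOmegaIdeal ω) ≃+* ZMod p) :
    g.map (e.toRingHom.comp (Ideal.Quotient.mk (oneSubOmegaIdeal ω))) = 0 := by
  classical
  haveI : Fact p.Prime := ⟨hp⟩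
  set φ : Zomega ω →+* ZMod p := e.toRingHom.comp (Ideal.Quotient.mk (oneSubOmegaIdeal ω)) with hφ
  -- φ sends ω to 1
  have hφω : φ (omegaEl ω) = 1 := by
    have h1 : (Ideal.Quotient.mk (oneSubOmegaIdeal ω)) (omegaEl ω)
        = (Ideal.Quotient.mk (oneSubOmegaIdeal ω)) 1 := by
      rw [Ideal.Quotient.eq]
      have : omegaEl ω - 1 = -(1 - omegaEl ω) := by ring
      rw [this]
      exact neg_mem (Ideal.subset_span (Set.mem_singleton _))
    show e ((Ideal.Quotient.mk (oneSubOmegaIdeal ω)) (omegaEl ω)) = 1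
    rw [h1, map_one, map_one]
  -- the inclusion into ℂ
  set v : Zomega ω →+* ℂ := ((Zomega ω).val : Zomega ω →ₐ[ℤ] ℂ).toRingHom with hv
  have hvinj : Function.Injective v := Subtype.val_injective
  -- the auxiliary polynomial
  set h : Polynomial (Zomega ω) :=
    ∏ i ∈ I, (Polynomial.X - Polynomial.C (omegaEl ω ^ i)) with hh
  have hmono : h.Monic :=
    Polynomial.monic_prod_of_monic _ _ fun i _ => Polynomial.monic_X_sub_C _
  have hmapv : h.map v = ∏ i ∈ I, (Polynomial.X - Polynomial.C (ω ^ i)) := by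
    rw [hh, Polynomial.map_prod]
    refine Finset.prod_congr rfl fun i _ => ?_
    rw [Polynomial.map_sub, Polynomial.map_X, Polynomial.map_C]
    rfl
  -- h divides g
  have hdvd : h ∣ g := by
    rcases eq_or_ne g 0 with rfl | hg0
    · exact dvd_zero h
    have hG0 : g.map v ≠ 0 := fun hc => hg0 (Polynomial.map_injective v hvinj (by simpa using hc))
    have hGeq : g.map v = ∑ j ∈ J, Polynomial.C ((a j : ℂ)) * Polynomial.X ^ j := by
      rw [hg, Polynomial.map_sum]
      refine Finset.sum_congr rfl fun j _ => ?_
      rw [Polynomial.map_mul, Polynomial.map_pow, Polynomial.map_C, Polynomial.map_X]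
      rfl
    have hroot : ∀ i ∈ I, (g.map v).IsRoot (ω ^ i) := by
      intro i hi
      rw [Polynomial.IsRoot, hGeq, Polynomial.eval_finset_sum]
      simpa using hvan i hi
    set m : Multiset ℂ := I.val.map (fun i => ω ^ i) with hm
    have hnodup : m.Nodup := by
      refine I.nodup.map_on ?_
      intro x hx y hy hxy
      exact hω.pow_inj (Finset.mem_range.1 (hI hx)) (Finset.mem_range.1 (hI hy)) hxy
    have hle : m ≤ (g.map v).roots := by
      rw [Multiset.le_iff_count]
      intro r
      by_cases hr : r ∈ m
      · have h1 : m.count r = 1 := Multiset.count_eq_one_of_mem hnodup hr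
        obtain ⟨i, hi, rfl⟩ := Multiset.mem_map.1 hr
        rw [h1, Polynomial.count_roots]
        exact (Polynomial.rootMultiplicity_pos hG0).2 (hroot i hi)
      · rw [Multiset.count_eq_zero_of_notMem hr]
        exact Nat.zero_le _
    have hdvdC : (m.map fun r => Polynomial.X - Polynomial.C r).prod ∣ g.map v :=
      (Multiset.prod_X_sub_C_dvd_iff_le_roots hG0 m).2 hle
    have hprod : (m.map fun r => Polynomial.X - Polynomial.C r).prod
        = ∏ i ∈ I, (Polynomial.X - Polynomial.C (ω ^ i)) := by
      rw [hm, Multiset.map_map, Finset.prod_eq_multiset_prod]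
      rfl
    rw [hprod, ← hmapv] at hdvdC
    exact (Polynomial.map_dvd_map v hvinj hmono).1 hdvdC
  -- push divisibility to ZMod p
  have hdvdp : ((Polynomial.X - 1 : Polynomial (ZMod p)) ^ I.card) ∣ g.map φ := by
    have h1 : h.map φ ∣ g.map φ := Polynomial.map_dvd φ hdvd
    have h2 : h.map φ = (Polynomial.X - 1 : Polynomial (ZMod p)) ^ I.card := by
      rw [hh, Polynomial.map_prod, ← Finset.prod_const]
      refine Finset.prod_congr rfl fun i _ => ?_
      rw [Polynomial.map_sub, Polynomial.map_X, Polynomial.map_C, map_pow, hφω, one_pow,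
        Polynomial.C_1]
    rwa [h2] at h1
  -- support facts
  have hsuppg : g.support ⊆ J := by
    intro n hn
    by_contra hnJ
    refine Polynomial.mem_support_iff.1 hn ?_
    rw [hg, Polynomial.finset_sum_coeff]
    refine Finset.sum_eq_zero fun j hj => ?_
    rw [Polynomial.coeff_C_mul, Polynomial.coeff_X_pow]
    have : n ≠ j := fun hc => hnJ (hc ▸ hj)
    simp [this]
  have hsupp : (g.map φ).support ⊆ J :=
    (Polynomial.support_map_subset φ g).trans hsuppg
  refine tao_lemma p J.card (g.map φ) ?_ ?_ ?_
  · exact fun j hj => Finset.mem_range.1 (hJ (hsupp hj))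
  · exact le_trans (Finset.card_le_card hsupp) le_rfl
  · rw [← hcard]
    exact hdvdp
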